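/- Let m>1 and N be real numbers, and let μ ≤ C_H := |(N-m)/m|^m. Then the set {β ∈ ℝ : G(β) ≥ μ} is a nonempty closed bounded interval [β⁻, β⁺] with β⁻ ≤ (m-N)/m ≤ β⁺, where G(β) = -β|β|^{m-2}(β(m-1)+N-m). Moreover if μ = C_H then β⁻ = β⁺ = (m-N)/m. -/

import Mathlib

open Real Set Filter

private noncomputable def Gf (m N : ℝ) : ℝ → ℝ :=
  fun β => -β * |β| ^ (m - 2) * (β * (m - 1) + N - m)

private lemma Gf_pos_formula (m N : ℝ) {β : ℝ} (hβ : 0 < β) :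
    Gf m N β = -(m-1) * β ^ m + (m - N) * β ^ (m-1) := by
  have h1 : β * β ^ (m-2) = β ^ (m-1) := by
    rw [show β * β ^ (m-2) = β ^ (1:ℝ) * β ^ (m-2) by rw [Real.rpow_one],
      ← Real.rpow_add hβ]
    ring_nf
  have h2 : β * β ^ (m-1) = β ^ m := by
    rw [show β * β ^ (m-1) = β ^ (1:ℝ) * β ^ (m-1) by rw [Real.rpow_one],
      ← Real.rpow_add hβ]
    ring_nf
  rw [Gf, abs_of_pos hβ]
  linear_combination (-(β*(m-1)+N-m)) * h1 + (-(m-1)) * h2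

private lemma Gf_neg_formula (m N : ℝ) {β : ℝ} (hβ : β < 0) :
    Gf m N β = -(m-1) * (-β) ^ m - (m - N) * (-β) ^ (m-1) := by
  have hβ' : (0:ℝ) < -β := by linarith
  have h1 : (-β) * (-β) ^ (m-2) = (-β) ^ (m-1) := by
    rw [show (-β) * (-β) ^ (m-2) = (-β) ^ (1:ℝ) * (-β) ^ (m-2) by rw [Real.rpow_one],
      ← Real.rpow_add hβ']
    ring_nf
  have h2 : (-β) * (-β) ^ (m-1) = (-β) ^ m := by
    rw [show (-β) * (-β) ^ (m-1) = (-β) ^ (1:ℝ) * (-β) ^ (m-1) by rw [Real.rpow_one],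
      ← Real.rpow_add hβ']
    ring_nf
  rw [Gf, abs_of_neg hβ]
  linear_combination (β*(m-1)+N-m) * h1 + (-(m-1)) * h2

private lemma Gf_cont (m N : ℝ) (hm : 1 < m) : Continuous (Gf m N) := by
  have habs : Continuous (fun β : ℝ => |β| ^ (m-1)) := by
    rw [continuous_iff_continuousAt]
    intro x
    exact (Real.continuousAt_rpow_const _ _ (Or.inr (by linarith))).comp
      continuous_abs.continuousAt
  have hh : Continuous (fun β : ℝ => β * |β| ^ (m-2)) := by
    rw [continuous_iff_continuousAt]
    intro x
    rcases eq_or_ne x 0 with rfl | hx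
    · have hne : m - 1 ≠ 0 := sub_ne_zero.2 (by linarith)
      rw [ContinuousAt]
      simp only [zero_mul]
      rw [tendsto_zero_iff_abs_tendsto_zero]
      refine squeeze_zero (g := fun t => |t| ^ (m-1)) (fun t => abs_nonneg _) ?_ ?_
      · intro t
        rcases eq_or_ne t 0 with rfl | ht
        · simp [Real.zero_rpow hne]
        · have ht' : (0:ℝ) < |t| := abs_pos.2 ht
          show |t * |t| ^ (m-2)| ≤ |t| ^ (m-1)
          rw [abs_mul, abs_of_nonneg (Real.rpow_nonneg (abs_nonneg t) _),
            show |t| * |t| ^ (m-2) = |t| ^ (1:ℝ) * |t| ^ (m-2) by rw [Real.rpow_one],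
            ← Real.rpow_add ht', show (1:ℝ) + (m-2) = m - 1 by ring]
      · have := habs.continuousAt (x := 0)
        rw [ContinuousAt] at this
        simpa [Real.zero_rpow hne] using this
    · exact continuousAt_id.mul
        ((Real.continuousAt_rpow_const _ _ (Or.inl (abs_ne_zero.2 hx))).comp
          continuous_abs.continuousAt)
  have : Gf m N = fun β => -(β * |β| ^ (m-2)) * (β * (m-1) + N - m) := by
    funext β; rw [Gf]; ring
  rw [this]
  exact (hh.neg).mul (by continuity)

private lemma Gf_deriv_pos_side (m N : ℝ) (hm : 1 < m) {x : ℝ} (hx : 0 < x) :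
    HasDerivAt (Gf m N) ((m-1) * x ^ (m-2) * (m - N - m * x)) x := by
  have h1 : HasDerivAt (fun β : ℝ => β ^ m) (m * x ^ (m-1)) x :=
    Real.hasDerivAt_rpow_const (Or.inl hx.ne')
  have h2 : HasDerivAt (fun β : ℝ => β ^ (m-1)) ((m-1) * x ^ (m-1-1)) x :=
    Real.hasDerivAt_rpow_const (Or.inl hx.ne')
  have hF : HasDerivAt (fun β : ℝ => -(m-1) * β ^ m + (m - N) * β ^ (m-1))
      (-(m-1) * (m * x ^ (m-1)) + (m - N) * ((m-1) * x ^ (m-1-1))) x :=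
    (h1.const_mul _).add (h2.const_mul _)
  have e1 : x ^ (m-1) = x * x ^ (m-2) := by
    rw [show x * x ^ (m-2) = x ^ (1:ℝ) * x ^ (m-2) by rw [Real.rpow_one],
      ← Real.rpow_add hx]
    ring_nf
  have e2 : m - 1 - 1 = m - 2 := by ring
  have key : -(m-1) * (m * x ^ (m-1)) + (m - N) * ((m-1) * x ^ (m-1-1))
      = (m-1) * x ^ (m-2) * (m - N - m * x) := by rw [e2, e1]; ring
  rw [key] at hF
  refine hF.congr_of_eventuallyEq ?_
  filter_upwards [Ioi_mem_nhds hx] with z hz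
  exact Gf_pos_formula m N hz

private lemma Gf_deriv_neg_side (m N : ℝ) (hm : 1 < m) {x : ℝ} (hx : x < 0) :
    HasDerivAt (Gf m N) ((m-1) * (-x) ^ (m-2) * (m - N - m * x)) x := by
  have hx' : (0:ℝ) < -x := by linarith
  have hneg : HasDerivAt (fun β : ℝ => -β) (-1) x := (hasDerivAt_id x).neg
  have h1 : HasDerivAt (fun β : ℝ => (-β) ^ m) (m * (-x) ^ (m-1) * (-1)) x :=
    (Real.hasDerivAt_rpow_const (x := -x) (p := m) (Or.inl hx'.ne')).comp x hneg
  have h2 : HasDerivAt (fun β : ℝ => (-β) ^ (m-1)) ((m-1) * (-x) ^ (m-1-1) * (-1)) x :=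
    (Real.hasDerivAt_rpow_const (x := -x) (p := m-1) (Or.inl hx'.ne')).comp x hneg
  have hF : HasDerivAt (fun β : ℝ => -(m-1) * (-β) ^ m - (m - N) * (-β) ^ (m-1))
      (-(m-1) * (m * (-x) ^ (m-1) * (-1)) - (m - N) * ((m-1) * (-x) ^ (m-1-1) * (-1))) x :=
    (h1.const_mul _).sub (h2.const_mul _)
  have e1 : (-x) ^ (m-1) = (-x) * (-x) ^ (m-2) := by
    rw [show (-x) * (-x) ^ (m-2) = (-x) ^ (1:ℝ) * (-x) ^ (m-2) by rw [Real.rpow_one],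
      ← Real.rpow_add hx']
    ring_nf
  have e2 : m - 1 - 1 = m - 2 := by ring
  have key : -(m-1) * (m * (-x) ^ (m-1) * (-1)) - (m - N) * ((m-1) * (-x) ^ (m-1-1) * (-1))
      = (m-1) * (-x) ^ (m-2) * (m - N - m * x) := by rw [e2, e1]; ring
  rw [key] at hF
  refine hF.congr_of_eventuallyEq ?_
  filter_upwards [Iio_mem_nhds hx] with z hz
  exact Gf_neg_formula m N hz

private lemma Gf_deriv_pos (m N : ℝ) (hm : 1 < m) {z : ℝ} (hz : z ≠ 0)
    (hzb : z < (m - N) / m) : 0 < deriv (Gf m N) z := by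
  have hm0 : (0:ℝ) < m := by linarith
  have hfac : 0 < m - N - m * z := by
    rw [lt_div_iff₀ hm0] at hzb; linarith
  rcases hz.lt_or_gt with h | h
  · rw [(Gf_deriv_neg_side m N hm h).deriv]
    have h2 : (0:ℝ) < (-z) ^ (m-2) := Real.rpow_pos_of_pos (by linarith) _
    exact mul_pos (mul_pos (by linarith) h2) hfac
  · rw [(Gf_deriv_pos_side m N hm h).deriv]
    have h2 : (0:ℝ) < z ^ (m-2) := Real.rpow_pos_of_pos h _
    exact mul_pos (mul_pos (by linarith) h2) hfac

private lemma Gf_deriv_neg (m N : ℝ) (hm : 1 < m) {z : ℝ} (hz : z ≠ 0)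
    (hzb : (m - N) / m < z) : deriv (Gf m N) z < 0 := by
  have hm0 : (0:ℝ) < m := by linarith
  have hfac : m - N - m * z < 0 := by
    rw [div_lt_iff₀ hm0] at hzb
    nlinarith
  rcases hz.lt_or_gt with h | h
  · rw [(Gf_deriv_neg_side m N hm h).deriv]
    have h2 : (0:ℝ) < (-z) ^ (m-2) := Real.rpow_pos_of_pos (by linarith) _
    exact mul_neg_of_pos_of_neg (mul_pos (by linarith) h2) hfac
  · rw [(Gf_deriv_pos_side m N hm h).deriv]
    have h2 : (0:ℝ) < z ^ (m-2) := Real.rpow_pos_of_pos h _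
    exact mul_neg_of_pos_of_neg (mul_pos (by linarith) h2) hfac

/-- strict monotone below b0, through segments -/
private lemma Gf_segment_mono (m N : ℝ) (hm : 1 < m) {x y : ℝ} (hxy : x < y)
    (hy : y ≤ (m - N) / m) (hsgn : y ≤ 0 ∨ 0 ≤ x) : Gf m N x < Gf m N y := by
  have hc : ContinuousOn (Gf m N) (Icc x y) := (Gf_cont m N hm).continuousOn
  have : StrictMonoOn (Gf m N) (Icc x y) := by
    apply strictMonoOn_of_deriv_pos (convex_Icc _ _) hc
    intro z hz
    rw [interior_Icc] at hz
    have hz0 : z ≠ 0 := by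
      rcases hsgn with h | h
      · exact ne_of_lt (lt_of_lt_of_le hz.2 h)
      · exact ne_of_gt (lt_of_le_of_lt h hz.1)
    exact Gf_deriv_pos m N hm hz0 (lt_of_lt_of_le hz.2 hy)
  exact this (left_mem_Icc.2 hxy.le) (right_mem_Icc.2 hxy.le) hxy

private lemma Gf_mono (m N : ℝ) (hm : 1 < m) {x y : ℝ} (hxy : x < y)
    (hy : y ≤ (m - N) / m) : Gf m N x < Gf m N y := by
  rcases le_or_gt y 0 with h | h
  · exact Gf_segment_mono m N hm hxy hy (Or.inl h)
  rcases le_or_gt 0 x with h' | h'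
  · exact Gf_segment_mono m N hm hxy hy (Or.inr h')
  · calc Gf m N x < Gf m N 0 :=
        Gf_segment_mono m N hm h' (by linarith) (Or.inl le_rfl)
    _ < Gf m N y := Gf_segment_mono m N hm h hy (Or.inr le_rfl)

private lemma Gf_segment_anti (m N : ℝ) (hm : 1 < m) {x y : ℝ} (hxy : x < y)
    (hx : (m - N) / m ≤ x) (hsgn : y ≤ 0 ∨ 0 ≤ x) : Gf m N y < Gf m N x := by
  have hc : ContinuousOn (Gf m N) (Icc x y) := (Gf_cont m N hm).continuousOn
  have : StrictAntiOn (Gf m N) (Icc x y) := by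
    apply strictAntiOn_of_deriv_neg (convex_Icc _ _) hc
    intro z hz
    rw [interior_Icc] at hz
    have hz0 : z ≠ 0 := by
      rcases hsgn with h | h
      · exact ne_of_lt (lt_of_lt_of_le hz.2 h)
      · exact ne_of_gt (lt_of_le_of_lt h hz.1)
    exact Gf_deriv_neg m N hm hz0 (lt_of_le_of_lt hx hz.1)
  exact this (left_mem_Icc.2 hxy.le) (right_mem_Icc.2 hxy.le) hxy

private lemma Gf_anti (m N : ℝ) (hm : 1 < m) {x y : ℝ} (hxy : x < y)
    (hx : (m - N) / m ≤ x) : Gf m N y < Gf m N x := by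
  rcases le_or_gt y 0 with h | h
  · exact Gf_segment_anti m N hm hxy hx (Or.inl h)
  rcases le_or_gt 0 x with h' | h'
  · exact Gf_segment_anti m N hm hxy hx (Or.inr h')
  · calc Gf m N y < Gf m N 0 := Gf_segment_anti m N hm h (by linarith) (Or.inr le_rfl)
    _ < Gf m N x := Gf_segment_anti m N hm h' hx (Or.inl le_rfl)

private lemma Gf_value (m N : ℝ) (hm : 1 < m) :
    Gf m N ((m - N) / m) = |(N - m) / m| ^ m := by
  have hm0 : m ≠ 0 := by intro h; rw [h] at hm; linarith
  set c := (N - m) / m with hc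
  have hb : (m - N) / m = -c := by rw [hc]; ring
  rcases eq_or_ne c 0 with h0 | h0
  · rw [hb, h0]
    simp [Gf]
    rw [Real.zero_rpow (by linarith : m ≠ 0)]
  · have hinner : -c * (m-1) + N - m = c := by
      rw [hc]; field_simp; ring
    have habs : (0:ℝ) < |c| := abs_pos.2 h0
    rw [hb, Gf]
    rw [hinner, abs_neg]
    have hsq : - -c * |c| ^ (m-2) * c = |c| ^ (2:ℝ) * |c| ^ (m-2) := by
      have h22 : c * c = |c| ^ (2:ℝ) := by
        rw [show (2:ℝ) = ((2:ℕ):ℝ) by norm_num, Real.rpow_natCast, sq_abs, sq]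
      linear_combination |c| ^ (m-2) * h22
    rw [hsq, ← Real.rpow_add habs]
    congr 1
    ring

private lemma Gf_upper_pt (m N μ : ℝ) (hm : 1 < m) :
    ∃ t, (m - N) / m < t ∧ Gf m N t < μ := by
  set t := max 1 (max ((m-N)/m + 1) ((m - N + |μ| + 1)/(m-1))) with ht
  have ht1 : (1:ℝ) ≤ t := le_max_left _ _
  have htb : (m-N)/m + 1 ≤ t := le_trans (le_max_left _ _) (le_max_right _ _)
  have htc : (m - N + |μ| + 1)/(m-1) ≤ t := le_trans (le_max_right _ _) (le_max_right _ _)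
  have ht0 : (0:ℝ) < t := by linarith
  refine ⟨t, by linarith, ?_⟩
  rw [Gf_pos_formula m N ht0]
  have hm1 : (0:ℝ) < m - 1 := by linarith
  have hfac : m - N - (m-1)*t ≤ -(|μ|+1) := by
    rw [div_le_iff₀ hm1] at htc; linarith
  have hP : (1:ℝ) ≤ t ^ (m-1) := by
    calc (1:ℝ) = 1 ^ (m-1) := (Real.one_rpow _).symm
    _ ≤ t ^ (m-1) := Real.rpow_le_rpow zero_le_one ht1 (by linarith)
  have htm : t ^ m = t * t ^ (m-1) := by
    rw [show t * t ^ (m-1) = t ^ (1:ℝ) * t ^ (m-1) by rw [Real.rpow_one],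
      ← Real.rpow_add ht0]
    congr 1; ring
  have hval : -(m-1) * t ^ m + (m - N) * t ^ (m-1) = t ^ (m-1) * (m - N - (m-1)*t) := by
    rw [htm]; ring
  rw [hval]
  have h1 : t ^ (m-1) * (m - N - (m-1)*t) ≤ 1 * (m - N - (m-1)*t) :=
    mul_le_mul_of_nonpos_right hP (by linarith [abs_nonneg μ])
  linarith [h1, neg_abs_le μ, abs_nonneg μ]

private lemma Gf_lower_pt (m N μ : ℝ) (hm : 1 < m) :
    ∃ s, s < (m - N) / m ∧ Gf m N s < μ := by
  set u := max 1 (max (1 - (m-N)/m) ((N - m + |μ| + 1)/(m-1))) with hu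
  have hu1 : (1:ℝ) ≤ u := le_max_left _ _
  have hub : 1 - (m-N)/m ≤ u := le_trans (le_max_left _ _) (le_max_right _ _)
  have huc : (N - m + |μ| + 1)/(m-1) ≤ u := le_trans (le_max_right _ _) (le_max_right _ _)
  have hu0 : (0:ℝ) < u := by linarith
  refine ⟨-u, by linarith, ?_⟩
  rw [Gf_neg_formula m N (by linarith : -u < 0)]
  simp only [neg_neg]
  have hm1 : (0:ℝ) < m - 1 := by linarith
  have hfac : N - m - (m-1)*u ≤ -(|μ|+1) := by
    rw [div_le_iff₀ hm1] at huc; linarith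
  have hP : (1:ℝ) ≤ u ^ (m-1) := by
    calc (1:ℝ) = 1 ^ (m-1) := (Real.one_rpow _).symm
    _ ≤ u ^ (m-1) := Real.rpow_le_rpow zero_le_one hu1 (by linarith)
  have hum : u ^ m = u * u ^ (m-1) := by
    rw [show u * u ^ (m-1) = u ^ (1:ℝ) * u ^ (m-1) by rw [Real.rpow_one],
      ← Real.rpow_add hu0]
    congr 1; ring
  have hval : -(m-1) * u ^ m - (m - N) * u ^ (m-1) = u ^ (m-1) * (N - m - (m-1)*u) := by
    rw [hum]; ring
  rw [hval]
  have h1 : u ^ (m-1) * (N - m - (m-1)*u) ≤ 1 * (N - m - (m-1)*u) :=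
    mul_le_mul_of_nonpos_right hP (by linarith [abs_nonneg μ])
  linarith [h1, neg_abs_le μ, abs_nonneg μ]

/-- For m>1, N real, μ ≤ C_H = |(N-m)/m|^m, the set {β : G(β) ≥ μ} is a closed
bounded interval [β⁻,β⁺] with β⁻ ≤ (m-N)/m ≤ β⁺; if μ = C_H then β⁻ = β⁺ = (m-N)/m. -/
theorem stmt_2 (m N μ : ℝ) (hm : 1 < m) (hμ : μ ≤ |(N - m) / m| ^ m)
    (G : ℝ → ℝ) (hG : ∀ β : ℝ, G β = -β * |β| ^ (m - 2) * (β * (m - 1) + N - m)) :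
    ∃ βm βp : ℝ, βm ≤ (m - N) / m ∧ (m - N) / m ≤ βp ∧
      {β : ℝ | μ ≤ G β} = Set.Icc βm βp ∧
      (μ = |(N - m) / m| ^ m → βm = (m - N) / m ∧ βp = (m - N) / m) := by
  have hGf : G = Gf m N := funext fun β => hG β
  subst hGf
  have hval : Gf m N ((m - N) / m) = |(N - m)/m| ^ m := Gf_value m N hm
  set S := {β : ℝ | μ ≤ Gf m N β} with hSdef
  have hb0S : (m - N) / m ∈ S := by
    rw [hSdef, mem_setOf_eq, hval]; exact hμ
  have hclosed : IsClosed S := isClosed_Ici.preimage (Gf_cont m N hm)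
  obtain ⟨t, htb, htμ⟩ := Gf_upper_pt m N μ hm
  obtain ⟨s, hsb, hsμ⟩ := Gf_lower_pt m N μ hm
  have hsub : S ⊆ Icc s t := by
    intro β hβ
    rw [hSdef, mem_setOf_eq] at hβ
    constructor
    · by_contra h
      push_neg at h
      have := Gf_mono m N hm h hsb.le
      linarith
    · by_contra h
      push_neg at h
      have := Gf_anti m N hm h htb.le
      linarith
  have hcomp : IsCompact S :=
    Metric.isCompact_of_isClosed_isBounded hclosed ((Metric.isBounded_Icc s t).subset hsub)
  have hord : S.OrdConnected := by
    constructor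
    intro a ha b hb z hz
    rw [hSdef, mem_setOf_eq] at ha hb ⊢
    rcases le_or_gt z ((m - N) / m) with h | h
    · rcases eq_or_lt_of_le hz.1 with rfl | h'
      · exact ha
      · exact le_trans ha (Gf_mono m N hm h' h).le
    · rcases eq_or_lt_of_le hz.2 with rfl | h'
      · exact hb
      · exact le_trans hb (Gf_anti m N hm h' h.le).le
  have hconn : IsConnected S := ⟨⟨_, hb0S⟩, hord.isPreconnected⟩
  have hIcc : S = Icc (sInf S) (sSup S) := eq_Icc_of_connected_compact hconn hcomp
  refine ⟨sInf S, sSup S, csInf_le hcomp.bddBelow hb0S, le_csSup hcomp.bddAbove hb0S,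
    hIcc, ?_⟩
  intro hμeq
  have hsingle : S ⊆ {(m - N) / m} := by
    intro β hβ
    rw [hSdef, mem_setOf_eq, hμeq] at hβ
    rcases lt_trichotomy β ((m - N) / m) with h | h | h
    · have h2 := Gf_mono m N hm h le_rfl
      rw [hval] at h2
      exact absurd hβ (not_le.2 h2)
    · exact h
    · have h2 := Gf_anti m N hm h le_rfl
      rw [hval] at h2
      exact absurd hβ (not_le.2 h2)
  have hle : sInf S ≤ sSup S := csInf_le_csSup ⟨_, hb0S⟩ hcomp.bddBelow hcomp.bddAbove
  have h1 : sInf S ∈ S := Set.mem_of_mem_of_subset (left_mem_Icc.mpr hle) hIcc.symm.subset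
  have h2 : sSup S ∈ S := Set.mem_of_mem_of_subset (right_mem_Icc.mpr hle) hIcc.symm.subset
  exact ⟨hsingle h1, hsingle h2⟩
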